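/- Let M = (S, A, r, P, γ) be a finite discounted MDP and π : S → A any policy. Then the variance of the discounted cumulative reward satisfies the Bellman-type identity Ψ^π(s,a) = σ^π(s,a)² + γ² Σ_{s'} P_{s,a}(s') Ψ^π(s', π(s')) for all (s,a) ∈ S × A, i.e., Ψ^π = (σ^π)² + γ² P^π Ψ^π. -/

import Mathlib

set_option linter.unusedSectionVars false
set_option linter.unusedVariables false
set_option maxHeartbeats 1000000

open MeasureTheory ProbabilityTheory

namespace VBI

variable {S : Type*} [Fintype S] [Nonempty S] [DecidableEq S] [MeasurableSpace S]
  [MeasurableSingletonClass S] {A : Type*} [Fintype A]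

/-- Cylinder set pinning coordinates `0..n`. -/
def cyl (n : ℕ) (w : ℕ → S) : Set (ℕ → S) := {ω | ∀ i ≤ n, ω i = w i}

/-- The collection of cylinder sets of level `≥ 1`. -/
def cylSystem (S : Type*) : Set (Set (ℕ → S)) :=
  {t | ∃ n : ℕ, 1 ≤ n ∧ ∃ w : ℕ → S, t = cyl n w}

lemma measurableSet_cyl (n : ℕ) (w : ℕ → S) : MeasurableSet (cyl n w) := by
  have : cyl n w = ⋂ i ∈ Finset.range (n+1), (fun ω : ℕ → S => ω i) ⁻¹' {w i} := by
    ext ω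
    simp [cyl, Nat.lt_succ_iff]
  rw [this]
  exact MeasurableSet.biInter (Finset.range (n+1)).countable_toSet fun i _ =>
    (measurable_pi_apply i) (measurableSet_singleton _)

lemma cyl_inter_of_le {n m : ℕ} (hnm : n ≤ m) (w u : ℕ → S)
    (h : (cyl n w ∩ cyl m u).Nonempty) : cyl n w ∩ cyl m u = cyl m u := by
  obtain ⟨ω, hw, hu⟩ := h
  apply Set.inter_eq_self_of_subset_right
  intro x hx i hi
  rw [hx i (hi.trans hnm), ← hu i (hi.trans hnm), ← hw i hi]

lemma isPiSystem_cylSystem : IsPiSystem (cylSystem S) := by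
  rintro t ⟨n, hn, w, rfl⟩ t' ⟨m, hm, u, rfl⟩ hne
  rcases le_total n m with h | h
  · exact ⟨m, hm, u, (cyl_inter_of_le h w u hne).symm ▸ rfl⟩
  · rw [Set.inter_comm] at hne ⊢
    exact ⟨n, hn, w, (cyl_inter_of_le h u w hne).symm ▸ rfl⟩

lemma generateFrom_cylSystem :
    (inferInstance : MeasurableSpace (ℕ → S)) = MeasurableSpace.generateFrom (cylSystem S) := by
  apply le_antisymm
  · rw [MeasurableSpace.pi_eq_generateFrom_projections]
    apply MeasurableSpace.generateFrom_le
    rintro t ⟨i, A, hA, rfl⟩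
    -- A is a finite union of singletons
    have hA' : (fun ω : ℕ → S => ω i) ⁻¹' A = ⋃ x ∈ A, (fun ω : ℕ → S => ω i) ⁻¹' {x} := by
      ext ω; simp
    rw [hA']
    apply MeasurableSet.biUnion A.to_countable
    intro x _
    -- eval i ⁻¹' {x} is a finite union of cylinders
    have key : (fun ω : ℕ → S => ω i) ⁻¹' {x} =
        ⋃ (f : Fin (i+2) → S) (_ : f ⟨i, by omega⟩ = x),
          cyl (i+1) (fun j => if h : j < i+2 then f ⟨j, h⟩ else x) := by
      ext ω
      constructor
      · intro hω
        refine Set.mem_iUnion.2 ⟨fun j => ω j, Set.mem_iUnion.2 ⟨hω, ?_⟩⟩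
        intro j hj
        simp only
        rw [dif_pos (by omega)]
      · intro hω
        obtain ⟨f, hf⟩ := Set.mem_iUnion.1 hω
        obtain ⟨hfx, hc⟩ := Set.mem_iUnion.1 hf
        have := hc i (by omega)
        simpa [dif_pos (show i < i+2 by omega), hfx] using this
    rw [key]
    apply MeasurableSet.iUnion
    intro f
    apply MeasurableSet.iUnion
    intro _
    exact MeasurableSpace.measurableSet_generateFrom ⟨i+1, by omega, _, rfl⟩
  · apply MeasurableSpace.generateFrom_le
    rintro t ⟨n, hn, w, rfl⟩
    exact measurableSet_cyl n w

lemma measure_ext_of_cyl {μ ν : Measure (ℕ → S)} [IsProbabilityMeasure μ]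
    [IsProbabilityMeasure ν]
    (h : ∀ n, 1 ≤ n → ∀ w : ℕ → S, μ (cyl n w) = ν (cyl n w)) : μ = ν := by
  refine ext_of_generate_finite (cylSystem S) generateFrom_cylSystem isPiSystem_cylSystem ?_ ?_
  · rintro t ⟨n, hn, w, rfl⟩
    exact h n hn w
  · simp

/-- Prepend a state to a path. -/
def prep (x : S) (w : ℕ → S) : ℕ → S := fun j => Nat.casesOn j x fun i => w i

/-- The shift map on paths. -/
def shift : (ℕ → S) → (ℕ → S) := fun ω k => ω (k + 1)

lemma measurable_shift : Measurable (shift (S := S)) :=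
  measurable_pi_lambda _ fun k => measurable_pi_apply (k + 1)

lemma shift_preimage_cyl (n : ℕ) (w : ℕ → S) :
    shift ⁻¹' cyl n w = ⋃ x : S, cyl (n + 1) (prep x w) := by
  ext ω
  constructor
  · intro hω
    refine Set.mem_iUnion.2 ⟨ω 0, fun i hi => ?_⟩
    cases i with
    | zero => rfl
    | succ j => exact hω j (by omega)
  · intro hω
    obtain ⟨x, hx⟩ := Set.mem_iUnion.1 hω
    intro i hi
    exact hx (i + 1) (by omega)

section
variable (P : S → A → S → ℝ) (hP0 : ∀ s a s', 0 ≤ P s a s') (hP1 : ∀ s a, ∑ s', P s a s' = 1)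
  (π : S → A) (μ : S → A → Measure (ℕ → S)) (hμ : ∀ s a, IsProbabilityMeasure (μ s a))
  (hfdd : ∀ s a (n : ℕ), 1 ≤ n → ∀ w : ℕ → S,
      μ s a {ω | ∀ i ≤ n, ω i = w i} =
        ENNReal.ofReal ((if w 0 = s then (1 : ℝ) else 0) * P s a (w 1) *
          ∏ k ∈ Finset.Ico 1 n, P (w k) (π (w k)) (w (k + 1))))

include hP0 hP1 hμ hfdd

lemma ae_coord_zero (s : S) (a : A) : ∀ᵐ ω ∂(μ s a), ω 0 = s := by
  have := hμ s a
  have hset : MeasurableSet {ω : ℕ → S | ω 0 = s} := by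
    have h : {ω : ℕ → S | ω 0 = s} = (fun ω : ℕ → S => ω 0) ⁻¹' {s} := rfl
    rw [h]
    exact measurable_pi_apply 0 (measurableSet_singleton s)
  have hone : μ s a {ω : ℕ → S | ω 0 = s} = 1 := by
    have hdecomp : {ω : ℕ → S | ω 0 = s} = ⋃ x : S, cyl 1 (prep s fun _ => x) := by
      ext ω
      constructor
      · intro hω
        refine Set.mem_iUnion.2 ⟨ω 1, fun i hi => ?_⟩
        interval_cases i
        · exact hω
        · rfl
      · intro hω
        obtain ⟨x, hx⟩ := Set.mem_iUnion.1 hω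
        exact hx 0 (by omega)
    have hdisj : Pairwise (Function.onFun Disjoint fun x : S => cyl 1 (prep s fun _ => x)) := by
      intro x y hxy
      refine Set.disjoint_left.2 fun ω hx hy => hxy ?_
      have h1 := hx 1 le_rfl
      have h2 := hy 1 le_rfl
      exact h1.symm.trans h2
    rw [hdecomp, measure_iUnion hdisj fun x => measurableSet_cyl _ _]
    have : ∀ x : S, μ s a (cyl 1 (prep s fun _ => x)) = ENNReal.ofReal (P s a x) := by
      intro x
      rw [show cyl 1 (prep s fun _ => x) = {ω : ℕ → S | ∀ i ≤ 1, ω i = (prep s fun _ => x) i} from rfl,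
        hfdd s a 1 le_rfl]
      simp [prep]
    rw [tsum_fintype]
    simp only [this]
    rw [← ENNReal.ofReal_sum_of_nonneg fun x _ => hP0 s a x, hP1 s a, ENNReal.ofReal_one]
  rw [Filter.eventually_iff, mem_ae_iff]
  rw [show {x : ℕ → S | x 0 = s}ᶜ = {ω : ℕ → S | ω 0 = s}ᶜ from rfl,
    measure_compl hset (measure_ne_top _ _), hone, measure_univ, tsub_self]

lemma map_shift_eq (s : S) (a : A) :
    Measure.map shift (μ s a) = ∑ s' : S, ENNReal.ofReal (P s a s') • μ s' (π s') := by
  have := hμ s a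
  have hps : IsProbabilityMeasure (Measure.map shift (μ s a)) :=
    Measure.isProbabilityMeasure_map measurable_shift.aemeasurable
  have hps' : IsProbabilityMeasure (∑ s' : S, ENNReal.ofReal (P s a s') • μ s' (π s')) := by
    constructor
    rw [Measure.finset_sum_apply]
    have : ∀ s' : S, (ENNReal.ofReal (P s a s') • μ s' (π s')) Set.univ
        = ENNReal.ofReal (P s a s') := by
      intro s'
      have := hμ s' (π s')
      rw [Measure.smul_apply, measure_univ, smul_eq_mul, mul_one]
    simp only [this]
    rw [← ENNReal.ofReal_sum_of_nonneg fun x _ => hP0 s a x, hP1 s a, ENNReal.ofReal_one]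
  apply measure_ext_of_cyl
  intro n hn w
  -- LHS
  rw [Measure.map_apply measurable_shift (measurableSet_cyl n w), shift_preimage_cyl]
  have hdisj : Pairwise (Function.onFun Disjoint fun x : S => cyl (n+1) (prep x w)) := by
    intro x y hxy
    refine Set.disjoint_left.2 fun ω hx hy => hxy ?_
    have h1 := hx 0 (by omega)
    have h2 := hy 0 (by omega)
    exact h1.symm.trans h2
  rw [measure_iUnion hdisj fun x => measurableSet_cyl _ _, tsum_fintype]
  have hval : ∀ x : S, μ s a (cyl (n+1) (prep x w)) =
      ENNReal.ofReal ((if x = s then (1:ℝ) else 0) * P s a (w 0) *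
        ∏ k ∈ Finset.Ico 1 (n+1), P (w (k-1)) (π (w (k-1))) (w k)) := by
    intro x
    rw [show cyl (n+1) (prep x w) = {ω : ℕ → S | ∀ i ≤ n+1, ω i = (prep x w) i} from rfl,
      hfdd s a (n+1) (by omega)]
    have hpr : ∀ k ∈ Finset.Ico 1 (n+1),
        P (prep x w k) (π (prep x w k)) (prep x w (k+1)) = P (w (k-1)) (π (w (k-1))) (w k) := by
      intro k hk
      obtain ⟨hk1, _⟩ := Finset.mem_Ico.1 hk
      obtain ⟨j, rfl⟩ : ∃ j, k = j + 1 := ⟨k - 1, by omega⟩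
      rfl
    rw [Finset.prod_congr rfl hpr]
    rfl
  simp only [hval]
  rw [Finset.sum_eq_single s]
  rotate_left
  · intro b _ hb
    simp [hb]
  · simp
  rw [if_pos rfl, one_mul]
  -- reindex product: ∏_{k ∈ Ico 1 (n+1)} P (w (k-1)) .. (w k) = ∏_{j ∈ Ico 0 n} P (w j) .. (w (j+1))
  have hre : ∏ k ∈ Finset.Ico 1 (n+1), P (w (k-1)) (π (w (k-1))) (w k) =
      ∏ j ∈ Finset.range n, P (w j) (π (w j)) (w (j+1)) := by
    rw [Finset.prod_Ico_eq_prod_range]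
    simp only [Nat.add_sub_cancel]
    apply Finset.prod_congr rfl
    intro j _
    have e1 : 1 + j - 1 = j := by omega
    have e2 : 1 + j = j + 1 := by omega
    rw [e1, e2]
  rw [hre]
  -- RHS
  rw [Measure.finset_sum_apply]
  have hval' : ∀ s' : S, (ENNReal.ofReal (P s a s') • μ s' (π s')) (cyl n w) =
      ENNReal.ofReal (P s a s') * ENNReal.ofReal ((if w 0 = s' then (1:ℝ) else 0) *
        P s' (π s') (w 1) * ∏ k ∈ Finset.Ico 1 n, P (w k) (π (w k)) (w (k+1))) := by
    intro s'
    rw [Measure.smul_apply, smul_eq_mul,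
      show cyl n w = {ω : ℕ → S | ∀ i ≤ n, ω i = w i} from rfl, hfdd s' (π s') n hn]
  simp only [hval']
  rw [Finset.sum_eq_single (w 0)]
  rotate_left
  · intro b _ hb
    simp [Ne.symm hb]
  · simp
  rw [if_pos rfl, one_mul, ← ENNReal.ofReal_mul (hP0 _ _ _)]
  congr 1
  rw [Finset.range_eq_Ico, Finset.prod_eq_prod_Ico_succ_bot (show (0:ℕ) < n by omega)]

end

section G
variable (r : S → A → ℝ) (π : S → A) (γ : ℝ)

noncomputable def G (r : S → A → ℝ) (π : S → A) (γ : ℝ) : (ℕ → S) → ℝ :=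
  fun ω => ∑' k, γ ^ k * r (ω k) (π (ω k))

variable (hr0 : ∀ s a, 0 ≤ r s a) (hr1 : ∀ s a, r s a ≤ 1) (hγ0 : 0 < γ) (hγ1 : γ < 1)

include hr0 hr1 hγ0 hγ1 in
lemma summable_G : ∀ ω : ℕ → S, Summable fun k => γ ^ k * r (ω k) (π (ω k)) := by
  intro ω
  apply Summable.of_nonneg_of_le (fun k => mul_nonneg (pow_nonneg hγ0.le k) (hr0 _ _))
    (fun k => ?_) (summable_geometric_of_lt_one hγ0.le hγ1)
  calc γ ^ k * r (ω k) (π (ω k)) ≤ γ ^ k * 1 :=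
        mul_le_mul_of_nonneg_left (hr1 _ _) (pow_nonneg hγ0.le k)
    _ = γ ^ k := mul_one _

include hr0 hr1 hγ0 hγ1 in
lemma G_nonneg : ∀ ω, 0 ≤ G r π γ ω := fun ω =>
  tsum_nonneg fun k => mul_nonneg (pow_nonneg hγ0.le k) (hr0 _ _)

include hr0 hr1 hγ0 hγ1 in
lemma G_le : ∀ ω, G r π γ ω ≤ (1 - γ)⁻¹ := by
  intro ω
  rw [← tsum_geometric_of_lt_one hγ0.le hγ1]
  apply Summable.tsum_le_tsum (fun k => ?_) (summable_G r π γ hr0 hr1 hγ0 hγ1 ω)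
    (summable_geometric_of_lt_one hγ0.le hγ1)
  calc γ ^ k * r (ω k) (π (ω k)) ≤ γ ^ k * 1 :=
        mul_le_mul_of_nonneg_left (hr1 _ _) (pow_nonneg hγ0.le k)
    _ = γ ^ k := mul_one _

include hr0 hr1 hγ0 hγ1 in
lemma measurable_G : Measurable (G r π γ) := by
  apply measurable_of_tendsto_metrizable
    (f := fun n ω => ∑ k ∈ Finset.range n, γ ^ k * r (ω k) (π (ω k)))
  · intro n
    apply Finset.measurable_sum
    intro k _
    exact (measurable_of_countable (fun x : S => γ ^ k * r x (π x))).comp (measurable_pi_apply k)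
  · rw [tendsto_pi_nhds]
    intro ω
    exact (summable_G r π γ hr0 hr1 hγ0 hγ1 ω).hasSum.tendsto_sum_nat

include hr0 hr1 hγ0 hγ1 in
lemma G_shift : ∀ ω, G r π γ ω = r (ω 0) (π (ω 0)) + γ * G r π γ (shift ω) := by
  intro ω
  have hs := summable_G r π γ hr0 hr1 hγ0 hγ1 ω
  rw [G, Summable.tsum_eq_zero_add hs]
  simp only [pow_zero, one_mul]
  congr 1
  have : ∀ k : ℕ, γ ^ (k + 1) * r (ω (k + 1)) (π (ω (k + 1)))
      = γ * (γ ^ k * r (shift ω k) (π (shift ω k))) := by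
    intro k
    rw [pow_succ]
    show γ ^ k * γ * _ = _
    rw [show shift ω k = ω (k + 1) from rfl]
    ring
  rw [tsum_congr this, tsum_mul_left]
  rfl

end G
section main
variable (r : S → A → ℝ) (hr0 : ∀ s a, 0 ≤ r s a) (hr1 : ∀ s a, r s a ≤ 1)
  (P : S → A → S → ℝ) (hP0 : ∀ s a s', 0 ≤ P s a s') (hP1 : ∀ s a, ∑ s', P s a s' = 1)
  (γ : ℝ) (hγ0 : 0 < γ) (hγ1 : γ < 1) (π : S → A)
  (q : S → A → ℝ) (hq : ∀ s a, q s a = r s a + γ * ∑ s', P s a s' * q s' (π s'))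
  (μ : S → A → Measure (ℕ → S)) (hμ : ∀ s a, IsProbabilityMeasure (μ s a))
  (hfdd : ∀ s a (n : ℕ), 1 ≤ n → ∀ w : ℕ → S,
      μ s a {ω | ∀ i ≤ n, ω i = w i} =
        ENNReal.ofReal ((if w 0 = s then (1 : ℝ) else 0) * P s a (w 1) *
          ∏ k ∈ Finset.Ico 1 n, P (w k) (π (w k)) (w (k + 1))))

lemma integrable_of_bdd {ν : Measure (ℕ → S)} [IsFiniteMeasure ν] {f : (ℕ → S) → ℝ}
    (hm : Measurable f) (C : ℝ) (hb : ∀ ω, |f ω| ≤ C) : Integrable f ν :=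
  memLp_one_iff_integrable.mp
    (MemLp.of_bound hm.aestronglyMeasurable C (Filter.Eventually.of_forall hb))

include r hr0 hr1 P hP0 hP1 γ hγ0 hγ1 π q hq μ hμ hfdd

lemma abs_G_le' : ∀ ω : ℕ → S, |G r π γ ω| ≤ (1 - γ)⁻¹ := fun ω =>
  abs_le.2 ⟨by nlinarith [G_nonneg r π γ hr0 hr1 hγ0 hγ1 ω,
      inv_nonneg.2 (by linarith : (0:ℝ) ≤ 1 - γ)], G_le r π γ hr0 hr1 hγ0 hγ1 ω⟩

lemma integrable_G (ν : Measure (ℕ → S)) [IsFiniteMeasure ν] : Integrable (G r π γ) ν :=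
  integrable_of_bdd (measurable_G r π γ hr0 hr1 hγ0 hγ1) _ (abs_G_le' r hr0 hr1 P hP0 hP1 γ hγ0 hγ1 π q hq μ hμ hfdd)

lemma integrable_Gsq (ν : Measure (ℕ → S)) [IsFiniteMeasure ν] :
    Integrable (fun ω => (G r π γ ω) ^ 2) ν := by
  apply integrable_of_bdd ((measurable_G r π γ hr0 hr1 hγ0 hγ1).pow_const 2) (((1 - γ)⁻¹) ^ 2)
  intro ω
  rw [abs_pow]
  exact pow_le_pow_left₀ (abs_nonneg _) (abs_G_le' r hr0 hr1 P hP0 hP1 γ hγ0 hγ1 π q hq μ hμ hfdd ω) 2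

lemma memLp2_G (ν : Measure (ℕ → S)) [IsFiniteMeasure ν] : MemLp (G r π γ) 2 ν :=
  MemLp.of_bound (measurable_G r π γ hr0 hr1 hγ0 hγ1).aestronglyMeasurable _
    (Filter.Eventually.of_forall (abs_G_le' r hr0 hr1 P hP0 hP1 γ hγ0 hγ1 π q hq μ hμ hfdd))

lemma int_mix (f : (ℕ → S) → ℝ) (hm : Measurable f) (C : ℝ) (hb : ∀ ω, |f ω| ≤ C)
    (s : S) (a : A) :
    ∫ ω, f ω ∂(Measure.map shift (μ s a)) = ∑ s', P s a s' * ∫ ω, f ω ∂(μ s' (π s')) := by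
  rw [map_shift_eq P hP0 hP1 π μ hμ hfdd s a, integral_finset_sum_measure]
  · apply Finset.sum_congr rfl
    intro s' _
    rw [integral_smul_measure, ENNReal.toReal_ofReal (hP0 s a s'), smul_eq_mul]
  · intro s' _
    have := hμ s' (π s')
    exact (integrable_of_bdd hm C hb).smul_measure ENNReal.ofReal_ne_top

lemma int_comp_shift (f : (ℕ → S) → ℝ) (hm : Measurable f) (C : ℝ) (hb : ∀ ω, |f ω| ≤ C)
    (s : S) (a : A) :
    ∫ ω, f (shift ω) ∂(μ s a) = ∑ s', P s a s' * ∫ ω, f ω ∂(μ s' (π s')) := by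
  rw [← int_mix r hr0 hr1 P hP0 hP1 γ hγ0 hγ1 π q hq μ hμ hfdd f hm C hb s a]
  exact (integral_map measurable_shift.aemeasurable hm.aestronglyMeasurable).symm

lemma integrable_G_shift (s : S) (a : A) : Integrable (fun ω => G r π γ (shift ω)) (μ s a) := by
  have := hμ s a
  have h : IsProbabilityMeasure (Measure.map shift (μ s a)) :=
    Measure.isProbabilityMeasure_map measurable_shift.aemeasurable
  exact (integrable_G r hr0 hr1 P hP0 hP1 γ hγ0 hγ1 π q hq μ hμ hfdd (Measure.map shift (μ s a))).comp_measurable measurable_shift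

lemma integrable_Gsq_shift (s : S) (a : A) :
    Integrable (fun ω => (G r π γ (shift ω)) ^ 2) (μ s a) := by
  have := hμ s a
  have h : IsProbabilityMeasure (Measure.map shift (μ s a)) :=
    Measure.isProbabilityMeasure_map measurable_shift.aemeasurable
  exact (integrable_Gsq r hr0 hr1 P hP0 hP1 γ hγ0 hγ1 π q hq μ hμ hfdd (Measure.map shift (μ s a))).comp_measurable measurable_shift

lemma mean_bellman (s : S) (a : A) :
    ∫ ω, G r π γ ω ∂(μ s a) =
      r s (π s) + γ * ∑ s', P s a s' * ∫ ω, G r π γ ω ∂(μ s' (π s')) := by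
  have := hμ s a
  have hae : ∀ᵐ ω ∂(μ s a), G r π γ ω = r s (π s) + γ * G r π γ (shift ω) :=
    (ae_coord_zero P hP0 hP1 π μ hμ hfdd s a).mono fun ω h => by
      rw [G_shift r π γ hr0 hr1 hγ0 hγ1 ω, h]
  rw [integral_congr_ae hae, integral_add (integrable_const _)
    ((integrable_G_shift r hr0 hr1 P hP0 hP1 γ hγ0 hγ1 π q hq μ hμ hfdd s a).const_mul γ),
    integral_const, integral_const_mul,
    int_comp_shift r hr0 hr1 P hP0 hP1 γ hγ0 hγ1 π q hq μ hμ hfdd _ (measurable_G r π γ hr0 hr1 hγ0 hγ1) _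
      (abs_G_le' r hr0 hr1 P hP0 hP1 γ hγ0 hγ1 π q hq μ hμ hfdd) s a]
  simp

lemma mean_eq_q : ∀ s : S, ∫ ω, G r π γ ω ∂(μ s (π s)) = q s (π s) := by
  set f : S → ℝ := fun s => ∫ ω, G r π γ ω ∂(μ s (π s)) - q s (π s) with hf_def
  have hf : ∀ s, f s = γ * ∑ s', P s (π s) s' * f s' := by
    intro s
    have h1 := mean_bellman r hr0 hr1 P hP0 hP1 γ hγ0 hγ1 π q hq μ hμ hfdd s (π s)
    have h2 := hq s (π s)
    simp only [hf_def]
    rw [h1, h2]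
    simp only [mul_sub, Finset.sum_sub_distrib]
    ring
  have hzero : ∀ s, f s = 0 := by
    obtain ⟨s₀, _, hmax⟩ := Finset.exists_max_image Finset.univ (fun s => |f s|)
      ⟨Classical.arbitrary S, Finset.mem_univ _⟩
    have hb : |f s₀| ≤ γ * |f s₀| := by
      calc |f s₀| = γ * |∑ s', P s₀ (π s₀) s' * f s'| := by
            rw [hf s₀, abs_mul, abs_of_pos hγ0]
        _ ≤ γ * ∑ s', P s₀ (π s₀) s' * |f s₀| := by
            apply mul_le_mul_of_nonneg_left _ hγ0.le
            calc |∑ s', P s₀ (π s₀) s' * f s'| ≤ ∑ s', |P s₀ (π s₀) s' * f s'| :=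
                  Finset.abs_sum_le_sum_abs _ _
              _ ≤ ∑ s', P s₀ (π s₀) s' * |f s₀| := by
                  apply Finset.sum_le_sum
                  intro s' _
                  rw [abs_mul, abs_of_nonneg (hP0 _ _ _)]
                  exact mul_le_mul_of_nonneg_left (hmax s' (Finset.mem_univ _)) (hP0 _ _ _)
        _ = γ * |f s₀| := by rw [← Finset.sum_mul, hP1, one_mul]
    have h0 : |f s₀| = 0 := by nlinarith [abs_nonneg (f s₀)]
    intro s
    have := hmax s (Finset.mem_univ _)
    rw [h0] at this
    exact abs_eq_zero.1 (le_antisymm this (abs_nonneg _))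
  intro s
  have := hzero s
  simp only [hf_def] at this
  linarith

lemma variance_eq (s : S) (a : A) :
    variance (G r π γ) (μ s a) =
      ∫ ω, (G r π γ ω) ^ 2 ∂(μ s a) - (∫ ω, G r π γ ω ∂(μ s a)) ^ 2 := by
  have := hμ s a
  rw [variance_eq_sub (memLp2_G r hr0 hr1 P hP0 hP1 γ hγ0 hγ1 π q hq μ hμ hfdd (μ s a))]
  simp only [Pi.pow_apply]

lemma main_identity (s : S) (a : A) :
    variance (G r π γ) (μ s a) =
      γ ^ 2 * (∑ s', P s a s' * (q s' (π s')) ^ 2 -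
          (∑ s', P s a s' * q s' (π s')) ^ 2) +
      γ ^ 2 * ∑ s', P s a s' * variance (G r π γ) (μ s' (π s')) := by
  have := hμ s a
  set c := r s (π s) with hc
  set M := ∑ s', P s a s' * q s' (π s') with hM
  set Q : S → ℝ := fun s' => ∫ ω, (G r π γ ω) ^ 2 ∂(μ s' (π s')) with hQ
  -- first moment
  have hI1 : ∫ ω, G r π γ ω ∂(μ s a) = c + γ * M := by
    rw [mean_bellman r hr0 hr1 P hP0 hP1 γ hγ0 hγ1 π q hq μ hμ hfdd s a, hM]
    congr 2
    apply Finset.sum_congr rfl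
    intro s' _
    rw [mean_eq_q r hr0 hr1 P hP0 hP1 γ hγ0 hγ1 π q hq μ hμ hfdd s']
  -- second moment
  have hae2 : ∀ᵐ ω ∂(μ s a), (G r π γ ω) ^ 2 =
      c ^ 2 + (2 * c * γ) * G r π γ (shift ω) + γ ^ 2 * (G r π γ (shift ω)) ^ 2 :=
    (ae_coord_zero P hP0 hP1 π μ hμ hfdd s a).mono fun ω h => by
      rw [G_shift r π γ hr0 hr1 hγ0 hγ1 ω, h]
      ring
  have e1 : ∫ ω, G r π γ (shift ω) ∂(μ s a) = M := by
    rw [int_comp_shift r hr0 hr1 P hP0 hP1 γ hγ0 hγ1 π q hq μ hμ hfdd _ (measurable_G r π γ hr0 hr1 hγ0 hγ1) _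
      (abs_G_le' r hr0 hr1 P hP0 hP1 γ hγ0 hγ1 π q hq μ hμ hfdd) s a, hM]
    exact Finset.sum_congr rfl fun s' _ => by rw [mean_eq_q r hr0 hr1 P hP0 hP1 γ hγ0 hγ1 π q hq μ hμ hfdd s']
  have e2 : ∫ ω, (G r π γ (shift ω)) ^ 2 ∂(μ s a) = ∑ s', P s a s' * Q s' := by
    rw [hQ]
    exact int_comp_shift r hr0 hr1 P hP0 hP1 γ hγ0 hγ1 π q hq μ hμ hfdd (fun ω => (G r π γ ω) ^ 2)
      ((measurable_G r π γ hr0 hr1 hγ0 hγ1).pow_const 2) (((1 - γ)⁻¹) ^ 2)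
      (fun ω => by
        rw [abs_pow]
        exact pow_le_pow_left₀ (abs_nonneg _) (abs_G_le' r hr0 hr1 P hP0 hP1 γ hγ0 hγ1 π q hq μ hμ hfdd ω) 2) s a
  have hI2 : ∫ ω, (G r π γ ω) ^ 2 ∂(μ s a)
      = c ^ 2 + (2 * c * γ) * M + γ ^ 2 * ∑ s', P s a s' * Q s' := by
    have hf1 : Integrable (fun ω => c ^ 2 + (2 * c * γ) * G r π γ (shift ω)) (μ s a) :=
      (integrable_const _).add
        ((integrable_G_shift r hr0 hr1 P hP0 hP1 γ hγ0 hγ1 π q hq μ hμ hfdd s a).const_mul _)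
    have hf2 : Integrable (fun ω => γ ^ 2 * (G r π γ (shift ω)) ^ 2) (μ s a) :=
      (integrable_Gsq_shift r hr0 hr1 P hP0 hP1 γ hγ0 hγ1 π q hq μ hμ hfdd s a).const_mul _
    have hf3 : Integrable (fun ω => (2 * c * γ) * G r π γ (shift ω)) (μ s a) :=
      (integrable_G_shift r hr0 hr1 P hP0 hP1 γ hγ0 hγ1 π q hq μ hμ hfdd s a).const_mul _
    rw [integral_congr_ae hae2, integral_add hf1 hf2,
      integral_add (integrable_const _) hf3,
      integral_const, integral_const_mul, integral_const_mul, e1, e2]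
    simp
  have hvs : ∀ s', variance (G r π γ) (μ s' (π s')) = Q s' - (q s' (π s')) ^ 2 := fun s' => by
    rw [variance_eq r hr0 hr1 P hP0 hP1 γ hγ0 hγ1 π q hq μ hμ hfdd s' (π s'), mean_eq_q r hr0 hr1 P hP0 hP1 γ hγ0 hγ1 π q hq μ hμ hfdd s']
  rw [variance_eq r hr0 hr1 P hP0 hP1 γ hγ0 hγ1 π q hq μ hμ hfdd s a, hI1, hI2]
  simp only [hvs]
  simp only [mul_sub, Finset.sum_sub_distrib]
  ring

end main
end VBI

/-- Bellman-type identity for the variance of the discounted cumulative reward: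
`Ψ^π = (σ^π)² + γ² P^π Ψ^π`.

The Markov chain started from `(s,a)` (i.e. `S₀ = s`, `S₁ ∼ P_{s,a}`, and
`S_{k+1} ∼ P_π(S_k,·)` for `k ≥ 1`) is encoded by its path measure `μ s a` on `ℕ → S`,
characterized through its finite-dimensional cylinder probabilities, and
`Ψ^π(s,a)` is the variance of `Σ_k γ^k r(S_k, π(S_k))` under `μ s a`. -/
theorem variance_bellman_identity
    {S A : Type*} [Fintype S] [Nonempty S] [DecidableEq S] [Fintype A] [Nonempty A]
    [MeasurableSpace S] [MeasurableSingletonClass S]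
    -- the MDP data
    (r : S → A → ℝ) (hr0 : ∀ s a, 0 ≤ r s a) (hr1 : ∀ s a, r s a ≤ 1)
    (P : S → A → S → ℝ) (hP0 : ∀ s a s', 0 ≤ P s a s') (hP1 : ∀ s a, ∑ s', P s a s' = 1)
    (γ : ℝ) (hγ0 : 0 < γ) (hγ1 : γ < 1)
    -- the policy and its q-function (characterized by its Bellman equation)
    (π : S → A)
    (q : S → A → ℝ) (hq : ∀ s a, q s a = r s a + γ * ∑ s', P s a s' * q s' (π s'))
    -- the path measures of the Markov chain started from (s,a)
    (μ : S → A → Measure (ℕ → S)) (hμ : ∀ s a, IsProbabilityMeasure (μ s a))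
    (hfdd : ∀ s a (n : ℕ), 1 ≤ n → ∀ w : ℕ → S,
      μ s a {ω | ∀ i ≤ n, ω i = w i} =
        ENNReal.ofReal ((if w 0 = s then (1 : ℝ) else 0) * P s a (w 1) *
          ∏ k ∈ Finset.Ico 1 n, P (w k) (π (w k)) (w (k + 1)))) :
    ∀ s a,
      variance (fun ω => ∑' k : ℕ, γ ^ k * r (ω k) (π (ω k))) (μ s a) =
        γ ^ 2 * (∑ s', P s a s' * (q s' (π s')) ^ 2 -
            (∑ s', P s a s' * q s' (π s')) ^ 2) +
        γ ^ 2 * ∑ s', P s a s' *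
          variance (fun ω => ∑' k : ℕ, γ ^ k * r (ω k) (π (ω k))) (μ s' (π s')) := by
  intro s a
  have hG : (fun ω : ℕ → S => ∑' k : ℕ, γ ^ k * r (ω k) (π (ω k))) = VBI.G r π γ := rfl
  rw [hG]
  exact VBI.main_identity r hr0 hr1 P hP0 hP1 γ hγ0 hγ1 π q hq μ hμ hfdd s a
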